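/- (Exponential/Grassmann characterization of the hyperpfaffian) For an m-dimensional l-block array B of size ln with l even, let ζ = ∑_{I^(1),…,I^(m) ∈ C([ln],l)} B(I^(1),…,I^(m)) ξ_{I^(1)} ⊕ ⋯ ⊕ ξ_{I^(m)} in the m-fold tensor product of exterior algebras on ξ₁,…,ξ_{ln}. Then ζ^n = n! · Pf^[l,m](B) · ξ ⊕ ⋯ ⊕ ξ (m factors), where ξ = ξ₁⋯ξ_{ln}. -/

import Mathlib

open scoped Classical
open Finset Equiv

noncomputable section

variable {F : Type*} [Field F] [CharZero F]

/-- The hyperdeterminant `det^[m]` of an `m`-dimensional tensor of size `n`: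
`∑_{σ₁,…,σ_{m-1}} sgn(σ₁⋯σ_{m-1}) ∏_i A(i, σ₁ i, …, σ_{m-1} i)`, encoded as a sum over
`m`-tuples of permutations whose `0`-th component is forced to be the identity. -/
def hyperdet (m n : ℕ) (A : (Fin m → Fin n) → F) : F :=
  ∑ σ : Fin m → Equiv.Perm (Fin n),
    if (∀ k : Fin m, k.1 = 0 → σ k = 1) then
      (∏ k, ((Equiv.Perm.sign (σ k) : ℤ) : F)) * ∏ i, A fun k => σ k i
    else 0

/-- `blk l n j i` is the `i`-th entry of the `j`-th consecutive block of length `l` in `[l*n]`. -/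
def blk (l n : ℕ) (j : Fin n) (i : Fin l) : Fin (l * n) :=
  ⟨j.1 * l + i.1, by
    have hi := i.2; have hj := j.2
    calc j.1 * l + i.1 < (j.1 + 1) * l := by rw [Nat.add_mul, Nat.one_mul]; omega
      _ ≤ n * l := Nat.mul_le_mul_right l hj
      _ = l * n := Nat.mul_comm n l⟩

/-- A permutation of `[l*n]` is block-increasing if it is increasing on each of the
`n` consecutive blocks of length `l`. -/
def BlockInc (l n : ℕ) (σ : Equiv.Perm (Fin (l * n))) : Prop :=
  ∀ j : Fin n, StrictMono fun i : Fin l => σ (blk l n j i)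

/-- The `j`-th block of `σ`, as a subset of `[l*n]`. -/
def blkSet (l n : ℕ) (σ : Equiv.Perm (Fin (l * n))) (j : Fin n) : Finset (Fin (l * n)) :=
  Finset.image (fun i => σ (blk l n j i)) Finset.univ

/-- The hyperpfaffian `Pf^[l,m]` of an `m`-dimensional `l`-block array of size `l*n`
(the `m` dimensions are indexed by an arbitrary finite type `ι`). -/
def hyperpf (l n : ℕ) {ι : Type*} [Fintype ι]
    (B : (ι → Finset (Fin (l * n))) → F) : F :=
  (n.factorial : F)⁻¹ *
    ∑ σ : ι → Equiv.Perm (Fin (l * n)),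
      if ∀ s, BlockInc l n (σ s) then
        (∏ s, ((Equiv.Perm.sign (σ s) : ℤ) : F)) *
          ∏ k : Fin n, B fun s => blkSet l n (σ s) k
      else 0

/-- The hyperhafnian `Hf^[l,m]` (same sum as the hyperpfaffian, without signs). -/
def hyperhf (l n : ℕ) {ι : Type*} [Fintype ι]
    (B : (ι → Finset (Fin (l * n))) → F) : F :=
  (n.factorial : F)⁻¹ *
    ∑ σ : ι → Equiv.Perm (Fin (l * n)),
      if ∀ s, BlockInc l n (σ s) then
        ∏ k : Fin n, B fun s => blkSet l n (σ s) k
      else 0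

/-- The Grassmann generator `ξ_i` in the exterior algebra on `Fin n → F`. -/
def xi (F : Type*) [Field F] (n : ℕ) (i : Fin n) : ExteriorAlgebra F (Fin n → F) :=
  ExteriorAlgebra.ι F (Pi.single i 1)

/-- `ξ_I`, the product of the generators `ξ_i`, `i ∈ I`, in increasing order. -/
def xiSet (F : Type*) [Field F] (n : ℕ) (I : Finset (Fin n)) :
    ExteriorAlgebra F (Fin n → F) :=
  ((I.sort (· ≤ ·)).map (xi F n)).prod

/-- `ξ = ξ₁ξ₂⋯ξ_n`. -/
def xiFull (F : Type*) [Field F] (n : ℕ) : ExteriorAlgebra F (Fin n → F) :=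
  ((List.finRange n).map (xi F n)).prod

/-- `η_i = ∑ A(i, i⁽¹⁾,…,i⁽ᵐ⁻¹⁾) ξ_{i⁽¹⁾} ⊕ ⋯ ⊕ ξ_{i⁽ᵐ⁻¹⁾}` in the `(m-1)`-fold tensor
product of exterior algebras (here `m = q+1`). -/
def eta {F : Type*} [Field F] {q n : ℕ} (A : (Fin (q + 1) → Fin n) → F) (i : Fin n) :
    PiTensorProduct F (fun _ : Fin q => ExteriorAlgebra F (Fin n → F)) :=
  ∑ f : Fin q → Fin n,
    A (Fin.cons i f) • PiTensorProduct.tprod F (fun k => xi F n (f k))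

set_option linter.unusedSectionVars false

section AuxLemmas


lemma aux_sum_pow {ι : Type*} [Fintype ι] {A : Type*} [Semiring A] (x : ι → A) (N : ℕ) :
    (∑ i, x i) ^ N = ∑ f : Fin N → ι, (List.ofFn fun k => x (f k)).prod := by
  induction N with
  | zero => simp
  | succ N ih =>
    rw [pow_succ', ih, Finset.sum_mul_sum]
    rw [← (Fin.consEquiv (fun _ => ι)).sum_comp (fun f => (List.ofFn fun k => x (f k)).prod)]
    rw [Fintype.sum_prod_type]
    refine Finset.sum_congr rfl fun i _ => Finset.sum_congr rfl fun f _ => ?_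
    simp [List.ofFn_succ]

lemma aux_smul_prod {R : Type*} [CommSemiring R] {A : Type*} [Semiring A] [Algebra R A]
    {N : ℕ} (c : Fin N → R) (t : Fin N → A) :
    (List.ofFn fun k => c k • t k).prod = (∏ k, c k) • (List.ofFn t).prod := by
  induction N with
  | zero => simp
  | succ N ih =>
    rw [List.ofFn_succ, List.prod_cons, ih, List.ofFn_succ (f := t), List.prod_cons,
      Fin.prod_univ_succ, smul_mul_assoc, mul_smul_comm, smul_smul]

lemma aux_tprod_prod {F : Type*} [Field F] {m : ℕ} {A : Type*} [Ring A] [Algebra F A]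
    {N : ℕ} (v : Fin N → Fin m → A) :
    (List.ofFn fun k => (PiTensorProduct.tprod F (s := fun _ : Fin m => A)) (v k)).prod
      = PiTensorProduct.tprod F (fun s => (List.ofFn fun k => v k s).prod) := by
  induction N with
  | zero =>
    simp only [List.ofFn_zero, List.prod_nil]
    exact ((PiTensorProduct.tprodMonoidHom F).map_one).symm
  | succ N ih =>
    rw [List.ofFn_succ, List.prod_cons, ih, PiTensorProduct.tprod_mul_tprod]
    congr 1
    funext s
    simp [List.ofFn_succ]





/-- `ξ_{g 0} ξ_{g 1} ⋯` -/
def xiF (F : Type*) [Field F] (N : ℕ) {k : ℕ} (g : Fin k → Fin N) :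
    ExteriorAlgebra F (Fin N → F) :=
  (ExteriorAlgebra.ιMulti F k) fun j => Pi.single (g j) (1 : F)

lemma xiF_eq_prod {N k : ℕ} (g : Fin k → Fin N) :
    xiF F N g = (List.ofFn fun j => xi F N (g j)).prod :=
  ExteriorAlgebra.ιMulti_apply _

lemma single_injective (N : ℕ) :
    Function.Injective (fun i : Fin N => (Pi.single i (1 : F) : Fin N → F)) := by
  intro i j h
  by_contra hne
  have h1 := congr_fun h i
  have h2 : (Pi.single i (1 : F) : Fin N → F) i = (Pi.single j (1 : F) : Fin N → F) i := h1
  rw [Pi.single_eq_same, Pi.single_eq_of_ne hne] at h2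
  exact one_ne_zero h2

lemma xiF_eq_zero {N : ℕ} {g : Fin N → Fin N} (hg : ¬ Function.Injective g) :
    xiF F N g = 0 := by
  refine AlternatingMap.map_eq_zero_of_not_injective _ _ fun hinj => hg ?_
  exact fun a b hab => hinj (by simp [hab])

lemma xiFull_eq : xiFull F N = xiF F N (id : Fin N → Fin N) := by
  rw [xiF_eq_prod, xiFull, List.ofFn_eq_map]
  rfl

lemma xiF_perm {N : ℕ} (τ : Equiv.Perm (Fin N)) :
    xiF F N (⇑τ) = ((Equiv.Perm.sign τ : ℤ) : F) • xiFull F N := by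
  rw [xiFull_eq]
  have := AlternatingMap.map_perm (ExteriorAlgebra.ιMulti F N)
    (fun j => Pi.single (j : Fin N) (1 : F)) τ
  rw [Int.cast_smul_eq_zsmul]
  simpa [xiF, Units.smul_def, Function.comp_def] using this

lemma xiSet_eq {N l : ℕ} (I : Finset (Fin N)) (h : I.card = l) :
    xiSet F N I = xiF F N (fun i => I.orderEmbOfFin h i) := by
  rw [xiF_eq_prod, xiSet]
  have : I.sort (· ≤ ·) = List.ofFn (fun i => I.orderEmbOfFin h i) := by
    refine List.ext_get (by simp [h]) fun i h1 h2 => ?_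
    simp [List.get_ofFn, Finset.orderEmbOfFin_apply]
  rw [this, List.map_ofFn]
  rfl



/-- block index of `j`. -/
def quo (l n : ℕ) (j : Fin (l * n)) : Fin n :=
  ⟨j.1 / l, by
    have hj := j.2
    rcases Nat.eq_zero_or_pos l with h | h
    · subst h; omega
    · exact (Nat.div_lt_iff_lt_mul h).2 (hj.trans_le (Nat.mul_comm l n).le)⟩

/-- position of `j` within its block. -/
def rem (l n : ℕ) (j : Fin (l * n)) : Fin l :=
  ⟨j.1 % l, by
    have hj := j.2
    rcases Nat.eq_zero_or_pos l with h | h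
    · subst h; omega
    · exact Nat.mod_lt _ h⟩

lemma blk_quo_rem (l n : ℕ) (j : Fin (l * n)) : blk l n (quo l n j) (rem l n j) = j := by
  apply Fin.ext
  show j.1 / l * l + j.1 % l = j.1
  rw [Nat.mul_comm]
  exact Nat.div_add_mod _ _

lemma quo_blk (l n : ℕ) (k : Fin n) (i : Fin l) : quo l n (blk l n k i) = k := by
  apply Fin.ext
  show (k.1 * l + i.1) / l = k.1
  have hl : 0 < l := Nat.pos_of_ne_zero (by rintro rfl; exact absurd i.2 (by omega))
  rw [Nat.mul_comm k.1 l, Nat.mul_add_div hl, Nat.div_eq_of_lt i.2, Nat.add_zero]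

lemma rem_blk (l n : ℕ) (k : Fin n) (i : Fin l) : rem l n (blk l n k i) = i := by
  apply Fin.ext
  show (k.1 * l + i.1) % l = i.1
  rw [Nat.mul_comm k.1 l, Nat.mul_add_mod, Nat.mod_eq_of_lt i.2]


lemma xiF_blocks {l n : ℕ} (g : Fin (l * n) → Fin (l * n)) :
    (List.ofFn fun k : Fin n => xiF F (l*n) (fun i : Fin l => g (blk l n k i))).prod
      = xiF F (l*n) g := by
  rw [xiF_eq_prod (g := g), List.ofFn_mul' (fun j => xi F (l*n) (g j)), List.prod_flatten,
    List.map_ofFn]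
  refine congrArg List.prod (congrArg List.ofFn (funext fun k => ?_))
  rw [Function.comp_apply, xiF_eq_prod]
  refine congrArg List.prod (congrArg List.ofFn (funext fun i => ?_))
  refine congrArg (xi F (l*n)) (congrArg g (Fin.ext ?_))
  show k.1 * l + i.1 = l * k.1 + i.1
  rw [Nat.mul_comm]

def gfun (l n : ℕ) (J : Fin n → Finset (Fin (l * n))) (j : Fin (l * n)) : Fin (l * n) :=
  if h : (J (quo l n j)).card = l then (J (quo l n j)).orderEmbOfFin h (rem l n j) else j

lemma gfun_blk {l n : ℕ} {J : Fin n → Finset (Fin (l * n))} (hJ : ∀ k, (J k).card = l)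
    (k : Fin n) (i : Fin l) :
    gfun l n J (blk l n k i) = (J k).orderEmbOfFin (hJ k) i := by
  simp only [gfun, quo_blk, rem_blk]
  rw [dif_pos (hJ k)]

lemma prod_xiSet {l n : ℕ} {J : Fin n → Finset (Fin (l*n))} (hJ : ∀ k, (J k).card = l) :
    (List.ofFn fun k => xiSet F (l*n) (J k)).prod = xiF F (l*n) (gfun l n J) := by
  rw [← xiF_blocks (gfun l n J)]
  refine congrArg List.prod (congrArg List.ofFn (funext fun k => ?_))
  rw [xiSet_eq (J k) (hJ k)]
  refine congrArg (xiF F (l*n)) (funext fun i => ?_)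
  rw [gfun_blk hJ]

lemma card_blkSet {l n : ℕ} (σ : Equiv.Perm (Fin (l * n))) (k : Fin n) :
    (blkSet l n σ k).card = l := by
  have hinj : Function.Injective (fun i : Fin l => σ (blk l n k i)) := by
    intro a b hab
    have h2 := σ.injective hab
    have h3 := congrArg Fin.val h2
    simp only [blk] at h3
    exact Fin.ext (by omega)
  rw [blkSet, Finset.card_image_of_injective _ hinj, Finset.card_univ, Fintype.card_fin]

lemma gfun_eq_perm {l n : ℕ} {σ : Equiv.Perm (Fin (l*n))} (hσ : BlockInc l n σ) :
    gfun l n (fun k => blkSet l n σ k) = ⇑σ := by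
  have key : ∀ (k : Fin n) (i : Fin l),
      gfun l n (fun k => blkSet l n σ k) (blk l n k i) = σ (blk l n k i) := by
    intro k i
    rw [gfun_blk (fun k => card_blkSet σ k)]
    have huniq : (fun i : Fin l => σ (blk l n k i))
        = ⇑((blkSet l n σ k).orderEmbOfFin (card_blkSet σ k)) :=
      Finset.orderEmbOfFin_unique _ (fun i => Finset.mem_image_of_mem _ (Finset.mem_univ i)) (hσ k)
    exact (congrFun huniq i).symm
  funext j
  conv_lhs => rw [← blk_quo_rem l n j]
  conv_rhs => rw [← blk_quo_rem l n j]
  exact key _ _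

lemma blockInc_of_gfun {l n : ℕ} {J : Fin n → Finset (Fin (l*n))} (hJ : ∀ k, (J k).card = l)
    (τ : Equiv.Perm (Fin (l*n))) (hτ : ⇑τ = gfun l n J) : BlockInc l n τ := by
  intro k
  have heq : (fun i : Fin l => τ (blk l n k i)) = fun i => (J k).orderEmbOfFin (hJ k) i := by
    funext i; rw [congrFun hτ, gfun_blk hJ]
  show StrictMono (fun i : Fin l => τ (blk l n k i))
  rw [heq]
  exact fun a b hab => ((J k).orderEmbOfFin (hJ k)).strictMono hab

lemma blkSet_eq {l n : ℕ} {J : Fin n → Finset (Fin (l*n))} (hJ : ∀ k, (J k).card = l)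
    (τ : Equiv.Perm (Fin (l*n))) (hτ : ⇑τ = gfun l n J) (k : Fin n) :
    blkSet l n τ k = J k := by
  refine Finset.eq_of_subset_of_card_le (fun x hx => ?_) ?_
  · obtain ⟨i, -, rfl⟩ := Finset.mem_image.1 hx
    rw [congrFun hτ, gfun_blk hJ]
    exact Finset.orderEmbOfFin_mem _ _ _
  · rw [hJ k, card_blkSet]

def Psi (l n m : ℕ) (f : Fin n → Fin m → Finset (Fin (l*n))) (s : Fin m) :
    Equiv.Perm (Fin (l*n)) :=
  if h : Function.Bijective (gfun l n fun k => f k s) then Equiv.ofBijective _ h else 1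

def Qpred (l n m : ℕ) (f : Fin n → Fin m → Finset (Fin (l*n))) : Prop :=
  (∀ k s, (f k s).card = l) ∧ ∀ s, Function.Injective (gfun l n (fun k => f k s))

lemma Psi_coe {l n m : ℕ} {f : Fin n → Fin m → Finset (Fin (l*n))} (hQ : Qpred l n m f)
    (s : Fin m) : ⇑(Psi l n m f s) = gfun l n (fun k => f k s) := by
  rw [Psi, dif_pos (Finite.injective_iff_bijective.mp (hQ.2 s))]
  rfl


lemma sum_univ_fintype_congr {α β : Type*} [AddCommMonoid β] (i1 i2 : Fintype α) (g : α → β) :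
    @Finset.sum α β _ (@Finset.univ α i1) g = @Finset.sum α β _ (@Finset.univ α i2) g := by
  rw [Subsingleton.elim i1 i2]

lemma term_eq {l n m : ℕ} (B : (Fin m → Finset (Fin (l * n))) → F)
    (f : Fin n → Fin m → Finset (Fin (l*n))) :
    (∏ k, (if ∀ s, (f k s).card = l then B (f k) else 0)) •
        PiTensorProduct.tprod F
          (fun s : Fin m => (List.ofFn fun k => xiSet F (l*n) (f k s)).prod)
      = if Qpred l n m f then
          ((∏ s, ((Equiv.Perm.sign (Psi l n m f s) : ℤ) : F)) * ∏ k, B (f k)) •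
            PiTensorProduct.tprod F (fun _ : Fin m => xiFull F (l*n))
        else 0 := by
  by_cases h1 : ∀ k s, (f k s).card = l
  · have hprod : (∏ k, (if ∀ s, (f k s).card = l then B (f k) else 0)) = ∏ k, B (f k) :=
      Finset.prod_congr rfl fun k _ => if_pos (h1 k)
    rw [hprod]
    by_cases h2 : ∀ s, Function.Injective (gfun l n (fun k => f k s))
    · have hQ : Qpred l n m f := ⟨h1, h2⟩
      rw [if_pos hQ]
      have hv : (fun s : Fin m => (List.ofFn fun k => xiSet F (l*n) (f k s)).prod)
          = fun s => ((Equiv.Perm.sign (Psi l n m f s) : ℤ) : F) • xiFull F (l*n) := by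
        funext s
        rw [prod_xiSet (fun k => h1 k s), ← Psi_coe hQ s, xiF_perm]
      rw [hv, MultilinearMap.map_smul_univ, smul_smul, mul_comm (∏ k, B (f k))]
    · rw [if_neg (fun hQ => h2 hQ.2)]
      push_neg at h2
      obtain ⟨s0, hs0⟩ := h2
      have hzero : (fun s : Fin m => (List.ofFn fun k => xiSet F (l*n) (f k s)).prod) s0 = 0 := by
        show (List.ofFn fun k => xiSet F (l*n) (f k s0)).prod = 0
        rw [prod_xiSet (fun k => h1 k s0)]
        exact xiF_eq_zero hs0
      rw [MultilinearMap.map_coord_zero _ s0 hzero, smul_zero]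
  · rw [if_neg (fun hQ => h1 hQ.1)]
    obtain ⟨k0, hk0⟩ := not_forall.1 h1
    have hz : (if ∀ s, (f k0 s).card = l then B (f k0) else 0) = 0 := if_neg hk0
    rw [Finset.prod_eq_zero (Finset.mem_univ k0) hz, zero_smul]

end AuxLemmas

/-- Grassmann characterization of the hyperpfaffian: `ζ^n = n! Pf^[l,m](B) ξ ⊕ ⋯ ⊕ ξ`. -/
theorem zeta_pow_eq_hyperpf (l m n : ℕ) (hl : Even l) (hl0 : 0 < l) (hn : 0 < n)
    (B : (Fin m → Finset (Fin (l * n))) → F) :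
    (∑ J : Fin m → Finset (Fin (l * n)),
        if ∀ s, (J s).card = l then
          B J • PiTensorProduct.tprod F (fun s : Fin m => xiSet F (l * n) (J s))
        else 0) ^ n
    = ((n.factorial : F) * hyperpf l n B) •
        PiTensorProduct.tprod F (fun _ : Fin m => xiFull F (l * n)) := by
  have hζ : (∑ J : Fin m → Finset (Fin (l * n)),
        if ∀ s, (J s).card = l then
          B J • PiTensorProduct.tprod F (fun s : Fin m => xiSet F (l * n) (J s))
        else 0)
      = ∑ J : Fin m → Finset (Fin (l * n)),
          (if ∀ s, (J s).card = l then B J else 0) •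
            PiTensorProduct.tprod F (fun s : Fin m => xiSet F (l * n) (J s)) :=
    Finset.sum_congr rfl fun J _ => by rw [ite_smul, zero_smul]
  rw [hζ, aux_sum_pow]
  have hstep : ∀ f : Fin n → Fin m → Finset (Fin (l * n)),
      (List.ofFn fun k =>
          (if ∀ s, (f k s).card = l then B (f k) else 0) •
            PiTensorProduct.tprod F (fun s : Fin m => xiSet F (l * n) (f k s))).prod
        = if Qpred l n m f then
            ((∏ s, ((Equiv.Perm.sign (Psi l n m f s) : ℤ) : F)) * ∏ k, B (f k)) •
              PiTensorProduct.tprod F (fun _ : Fin m => xiFull F (l*n))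
          else 0 := by
    intro f
    have e1 := aux_smul_prod (c := fun k => if ∀ s, (f k s).card = l then B (f k) else 0)
      (t := fun k => PiTensorProduct.tprod F (fun s : Fin m => xiSet F (l * n) (f k s)))
    rw [e1]
    have e2 := aux_tprod_prod (F := F) (v := fun k s => xiSet F (l * n) (f k s))
    rw [e2]
    exact term_eq B f
  rw [Finset.sum_congr rfl fun f _ => hstep f]
  rw [hyperpf, ← mul_assoc,
    mul_inv_cancel₀ (Nat.cast_ne_zero.mpr (Nat.factorial_ne_zero n)), one_mul,
    Finset.sum_smul]
  simp only [ite_smul, zero_smul]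
  refine Eq.trans ?_ (sum_univ_fintype_congr Pi.instFintype _ _)
  rw [← Finset.sum_filter, ← Finset.sum_filter]
  refine Finset.sum_nbij' (fun f => Psi l n m f) (fun σ => fun k s => blkSet l n (σ s) k)
    ?_ ?_ ?_ ?_ ?_
  · intro f hf
    rw [Finset.mem_filter] at hf ⊢
    refine ⟨Finset.mem_univ _, fun s => ?_⟩
    exact blockInc_of_gfun (fun k => hf.2.1 k s) _ (Psi_coe hf.2 s)
  · intro σ hσ
    rw [Finset.mem_filter] at hσ ⊢
    exact ⟨Finset.mem_univ _, fun k s => card_blkSet _ _,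
      fun s => by beta_reduce; rw [gfun_eq_perm (hσ.2 s)]; exact (σ s).injective⟩
  · intro f hf
    rw [Finset.mem_filter] at hf
    funext k s
    exact blkSet_eq (fun k => hf.2.1 k s) _ (Psi_coe hf.2 s) k
  · intro σ hσ
    rw [Finset.mem_filter] at hσ
    funext s
    have hg : gfun l n (fun k => blkSet l n (σ s) k) = ⇑(σ s) := gfun_eq_perm (hσ.2 s)
    have hb : Function.Bijective (gfun l n (fun k => blkSet l n (σ s) k)) := by
      rw [hg]; exact (σ s).bijective
    simp only [Psi]
    rw [dif_pos hb]
    exact Equiv.ext fun x => by rw [Equiv.ofBijective_apply, hg]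
  · intro f hf
    rw [Finset.mem_filter] at hf
    have hP : ∀ s, BlockInc l n (Psi l n m f s) :=
      fun s => blockInc_of_gfun (fun k => hf.2.1 k s) _ (Psi_coe hf.2 s)
    have hBk : ∀ k : Fin n, (fun s => blkSet l n (Psi l n m f s) k) = f k :=
      fun k => funext fun s => blkSet_eq (fun k => hf.2.1 k s) _ (Psi_coe hf.2 s) k
    exact congrArg (fun z => ((∏ s, ((Equiv.Perm.sign (Psi l n m f s) : ℤ) : F)) * z) •
        PiTensorProduct.tprod F (fun _ : Fin m => xiFull F (l * n)))
      (Finset.prod_congr rfl fun k _ => congrArg B (hBk k)).symm
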